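/- Let u : [a,b] → ℝ be Hölder continuous of order r ∈ (0,1] with constant H, and let f : [a,b] → ℝ be of bounded variation on [a,b]. Then for all a ≤ t₀ ≤ x ≤ t₁ ≤ b, |∫ₐᵇ f du − [u(x) − u(a)]·f(t₀) − [u(b) − u(x)]·f(t₁)| ≤ H · max{ t₀ − a, (t₁ − t₀)/2 + |x − (t₀+t₁)/2|, b − t₁ }^r · V(f;[a,b]). -/

import Mathlib

/-- A tagged partition of the interval `[a, b]`. -/
structure TaggedPartition (a b : ℝ) where
  n : ℕ
  pts : ℕ → ℝ
  tag : ℕ → ℝ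
  mono : ∀ i, pts i ≤ pts (i + 1)
  first : pts 0 = a
  last : pts n = b
  tag_mem : ∀ i, pts i ≤ tag i ∧ tag i ≤ pts (i + 1)

/-- The Riemann–Stieltjes sum of `f` with respect to `u` over a tagged partition. -/
def RSsum (f u : ℝ → ℝ) {a b : ℝ} (P : TaggedPartition a b) : ℝ :=
  ∑ i ∈ Finset.range P.n, f (P.tag i) * (u (P.pts (i + 1)) - u (P.pts i))

/-- `IsRSIntegral f u a b I` means the Riemann–Stieltjes integral `∫ₐᵇ f du` exists
and equals `I`: Riemann–Stieltjes sums converge to `I` as the mesh tends to `0`. -/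
def IsRSIntegral (f u : ℝ → ℝ) (a b I : ℝ) : Prop :=
  ∀ ε > 0, ∃ δ > 0, ∀ P : TaggedPartition a b,
    (∀ i < P.n, P.pts (i + 1) - P.pts i < δ) → |RSsum f u P - I| < ε

/-- The total (Jordan) variation of `u` on `[a, b]`. -/
noncomputable def totalVar (u : ℝ → ℝ) (a b : ℝ) : ℝ :=
  (eVariationOn u (Set.Icc a b)).toReal

namespace TwoPointAux

variable {a b c : ℝ}

/-! ### Gluing tagged partitions -/

def gluePts (P : TaggedPartition a c) (Q : TaggedPartition c b) : ℕ → ℝ :=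
  fun i => if i ≤ P.n then P.pts i else Q.pts (i - P.n)

def glueTag (P : TaggedPartition a c) (Q : TaggedPartition c b) : ℕ → ℝ :=
  fun i => if i < P.n then P.tag i else Q.tag (i - P.n)

lemma gluePts_le (P : TaggedPartition a c) (Q : TaggedPartition c b) {i : ℕ}
    (h : i ≤ P.n) : gluePts P Q i = P.pts i := by simp [gluePts, h]

lemma gluePts_ge (P : TaggedPartition a c) (Q : TaggedPartition c b) {i : ℕ}
    (h : P.n ≤ i) : gluePts P Q i = Q.pts (i - P.n) := by
  rcases eq_or_lt_of_le h with h' | h'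
  · subst h'
    simp [gluePts, P.last, Q.first]
  · have : ¬ (i ≤ P.n) := by omega
    simp [gluePts, this]

lemma glueTag_lt (P : TaggedPartition a c) (Q : TaggedPartition c b) {i : ℕ}
    (h : i < P.n) : glueTag P Q i = P.tag i := by simp [glueTag, h]

lemma glueTag_ge (P : TaggedPartition a c) (Q : TaggedPartition c b) {i : ℕ}
    (h : P.n ≤ i) : glueTag P Q i = Q.tag (i - P.n) := by
  have : ¬ (i < P.n) := by omega
  simp [glueTag, this]

def glue (P : TaggedPartition a c) (Q : TaggedPartition c b) : TaggedPartition a b where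
  n := P.n + Q.n
  pts := gluePts P Q
  tag := glueTag P Q
  mono := by
    intro i
    by_cases h1 : i + 1 ≤ P.n
    · rw [gluePts_le P Q (by omega), gluePts_le P Q h1]
      exact P.mono i
    · have hP : P.n ≤ i := by omega
      rw [gluePts_ge P Q hP, gluePts_ge P Q (by omega)]
      have e : i + 1 - P.n = (i - P.n) + 1 := by omega
      rw [e]
      exact Q.mono _
  first := by rw [gluePts_le P Q (Nat.zero_le _)]; exact P.first
  last := by
    rw [gluePts_ge P Q (Nat.le_add_right _ _)]
    have e : P.n + Q.n - P.n = Q.n := by omega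
    rw [e]; exact Q.last
  tag_mem := by
    intro i
    by_cases h : i < P.n
    · rw [glueTag_lt P Q h, gluePts_le P Q (by omega), gluePts_le P Q (by omega)]
      exact P.tag_mem i
    · have hP : P.n ≤ i := by omega
      rw [glueTag_ge P Q hP, gluePts_ge P Q hP, gluePts_ge P Q (by omega)]
      have e : i + 1 - P.n = (i - P.n) + 1 := by omega
      rw [e]
      exact Q.tag_mem _

@[simp] lemma glue_n (P : TaggedPartition a c) (Q : TaggedPartition c b) :
    (glue P Q).n = P.n + Q.n := rfl
@[simp] lemma glue_pts (P : TaggedPartition a c) (Q : TaggedPartition c b) :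
    (glue P Q).pts = gluePts P Q := rfl
@[simp] lemma glue_tag (P : TaggedPartition a c) (Q : TaggedPartition c b) :
    (glue P Q).tag = glueTag P Q := rfl

lemma RSsum_glue (f u : ℝ → ℝ) (P : TaggedPartition a c) (Q : TaggedPartition c b) :
    RSsum f u (glue P Q) = RSsum f u P + RSsum f u Q := by
  unfold RSsum
  rw [glue_n, glue_pts, glue_tag, Finset.sum_range_add]
  congr 1
  · refine Finset.sum_congr rfl fun i hi => ?_
    have hi' : i < P.n := Finset.mem_range.mp hi
    rw [glueTag_lt P Q hi', gluePts_le P Q (by omega), gluePts_le P Q (by omega)]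
  · refine Finset.sum_congr rfl fun j hj => ?_
    rw [glueTag_ge P Q (by omega), gluePts_ge P Q (by omega), gluePts_ge P Q (by omega)]
    have e1 : P.n + j - P.n = j := by omega
    have e2 : P.n + j + 1 - P.n = j + 1 := by omega
    rw [e1, e2]

def Vsum (f : ℝ → ℝ) {a b : ℝ} (P : TaggedPartition a b) : ℝ :=
  ∑ i ∈ Finset.range P.n, |f (P.pts (i + 1)) - f (P.pts i)|

lemma Vsum_nonneg (f : ℝ → ℝ) (P : TaggedPartition a b) : 0 ≤ Vsum f P :=
  Finset.sum_nonneg fun _ _ => abs_nonneg _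

lemma Vsum_glue (f : ℝ → ℝ) (P : TaggedPartition a c) (Q : TaggedPartition c b) :
    Vsum f (glue P Q) = Vsum f P + Vsum f Q := by
  unfold Vsum
  rw [glue_n, glue_pts, Finset.sum_range_add]
  congr 1
  · refine Finset.sum_congr rfl fun i hi => ?_
    have hi' : i < P.n := Finset.mem_range.mp hi
    rw [gluePts_le P Q (by omega), gluePts_le P Q (by omega)]
  · refine Finset.sum_congr rfl fun j hj => ?_
    rw [gluePts_ge P Q (by omega), gluePts_ge P Q (by omega)]
    have e1 : P.n + j - P.n = j := by omega
    have e2 : P.n + j + 1 - P.n = j + 1 := by omega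
    rw [e1, e2]

lemma Vsum_le_totalVar (f : ℝ → ℝ) (P : TaggedPartition a b)
    (hf : BoundedVariationOn f (Set.Icc a b)) : Vsum f P ≤ totalVar f a b := by
  set p : ℕ → ℝ := fun i => P.pts (min i P.n) with hp
  have hpm : Monotone P.pts := monotone_nat_of_le_succ P.mono
  have hmono : Monotone p := fun i j h => hpm (min_le_min h le_rfl)
  have hmem : ∀ i, p i ∈ Set.Icc a b := by
    intro i
    constructor
    · rw [← P.first]; exact hpm (Nat.zero_le _)
    · rw [← P.last]; exact hpm (min_le_right _ _)
  have h := eVariationOn.sum_le (f := f) (n := P.n) hmono hmem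
  have key : ∀ i ∈ Finset.range P.n,
      (edist (f (p (i + 1))) (f (p i))).toReal = |f (P.pts (i + 1)) - f (P.pts i)| := by
    intro i hi
    have hi' : i < P.n := Finset.mem_range.mp hi
    have e1 : p (i + 1) = P.pts (i + 1) := by
      simp only [hp]; rw [min_eq_left (by omega)]
    have e2 : p i = P.pts i := by
      simp only [hp]; rw [min_eq_left (by omega)]
    rw [e1, e2, edist_dist, ENNReal.toReal_ofReal dist_nonneg, Real.dist_eq]
  calc Vsum f P = ∑ i ∈ Finset.range P.n, (edist (f (p (i + 1))) (f (p i))).toReal :=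
        (Finset.sum_congr rfl key).symm
    _ = (∑ i ∈ Finset.range P.n, edist (f (p (i + 1))) (f (p i))).toReal :=
        (ENNReal.toReal_sum fun i _ => edist_ne_top _ _).symm
    _ ≤ totalVar f a b := ENNReal.toReal_mono hf h

/-! ### Uniform partitions -/

noncomputable def uPts (α β : ℝ) (k : ℕ) : ℕ → ℝ :=
  fun j => α + (β - α) * (min j k) / k

lemma uPts_zero (α β : ℝ) (k : ℕ) : uPts α β k 0 = α := by simp [uPts]

lemma uPts_last (α β : ℝ) {k : ℕ} (hk : 0 < k) : uPts α β k k = β := by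
  have : (k : ℝ) ≠ 0 := Nat.cast_ne_zero.mpr (by omega)
  simp only [uPts, min_self]
  field_simp
  ring

lemma uPts_mono {α β : ℝ} (h : α ≤ β) {k : ℕ} (hk : 0 < k) :
    ∀ j, uPts α β k j ≤ uPts α β k (j + 1) := by
  intro j
  unfold uPts
  have hk' : (0:ℝ) < k := by exact_mod_cast hk
  have hba : (0:ℝ) ≤ β - α := by linarith
  have hm : ((min j k : ℕ) : ℝ) ≤ ((min (j + 1) k : ℕ) : ℝ) := by
    exact_mod_cast min_le_min (Nat.le_succ j) le_rfl
  have key : (β - α) * ((min j k : ℕ) : ℝ) / k ≤ (β - α) * ((min (j + 1) k : ℕ) : ℝ) / k :=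
    (div_le_div_iff_of_pos_right hk').mpr (mul_le_mul_of_nonneg_left hm hba)
  linarith

lemma uPts_mem {α β : ℝ} (h : α ≤ β) {k : ℕ} (hk : 0 < k) (j : ℕ) :
    uPts α β k j ∈ Set.Icc α β := by
  have hk' : (0:ℝ) < k := by exact_mod_cast hk
  have hba : (0:ℝ) ≤ β - α := by linarith
  have h1 : (0:ℝ) ≤ ((min j k : ℕ) : ℝ) := by positivity
  have h2 : ((min j k : ℕ) : ℝ) ≤ (k : ℝ) := by exact_mod_cast min_le_right j k
  have key0 : 0 ≤ (β - α) * ((min j k : ℕ) : ℝ) / k :=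
    div_nonneg (mul_nonneg hba h1) hk'.le
  have key1 : (β - α) * ((min j k : ℕ) : ℝ) / k ≤ β - α := by
    rw [div_le_iff₀ hk']
    nlinarith
  constructor
  · unfold uPts; linarith
  · unfold uPts; linarith

lemma uPts_gap {α β : ℝ} (k : ℕ) {j : ℕ} (hj : j < k) :
    uPts α β k (j + 1) - uPts α β k j = (β - α) / k := by
  have hk' : (k : ℝ) ≠ 0 := Nat.cast_ne_zero.mpr (by omega)
  unfold uPts
  rw [min_eq_left (by omega : j + 1 ≤ k), min_eq_left (by omega : j ≤ k)]
  push_cast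
  field_simp
  ring

noncomputable def unifR (α β : ℝ) (h : α ≤ β) (k : ℕ) (hk : 0 < k) : TaggedPartition α β where
  n := k
  pts := uPts α β k
  tag := fun j => uPts α β k (j + 1)
  mono := uPts_mono h hk
  first := uPts_zero α β k
  last := uPts_last α β hk
  tag_mem := fun i => ⟨uPts_mono h hk i, le_rfl⟩

noncomputable def unifL (α β : ℝ) (h : α ≤ β) (k : ℕ) (hk : 0 < k) : TaggedPartition α β where
  n := k
  pts := uPts α β k
  tag := uPts α β k
  mono := uPts_mono h hk
  first := uPts_zero α β k
  last := uPts_last α β hk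
  tag_mem := fun i => ⟨le_rfl, uPts_mono h hk i⟩

/-! ### Abel summation identities and bounds -/

lemma abelR (f u : ℝ → ℝ) (y : ℕ → ℝ) (k : ℕ) :
    ∑ j ∈ Finset.range k, f (y (j + 1)) * (u (y (j + 1)) - u (y j))
      = f (y k) * (u (y k) - u (y 0))
        + ∑ j ∈ Finset.range k, (f (y j) - f (y (j + 1))) * (u (y j) - u (y 0)) := by
  induction k with
  | zero => simp
  | succ k ih =>
      rw [Finset.sum_range_succ, Finset.sum_range_succ, ih]
      ring

lemma abelL (f u : ℝ → ℝ) (y : ℕ → ℝ) (k : ℕ) :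
    ∑ j ∈ Finset.range k, f (y j) * (u (y (j + 1)) - u (y j))
      = f (y 0) * (u (y k) - u (y 0))
        + ∑ j ∈ Finset.range k, (f (y (j + 1)) - f (y j)) * (u (y k) - u (y (j + 1))) := by
  have h : ∀ j ∈ Finset.range k,
      f (y j) * (u (y (j + 1)) - u (y j))
        - (f (y (j + 1)) - f (y j)) * (u (y k) - u (y (j + 1)))
      = (fun i => f (y i) * (u (y i) - u (y k))) (j + 1)
        - (fun i => f (y i) * (u (y i) - u (y k))) j := by
    intro j _
    simp only
    ring
  have h2 := Finset.sum_congr rfl h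
  rw [Finset.sum_sub_distrib,
    Finset.sum_range_sub (fun i => f (y i) * (u (y i) - u (y k))) k] at h2
  have h3 : f (y k) * (u (y k) - u (y k)) = 0 := by ring
  have h4 : f (y 0) * (u (y 0) - u (y k)) = -(f (y 0) * (u (y k) - u (y 0))) := by ring
  linarith [h2, h3, h4]

lemma boundR (f u : ℝ → ℝ) (y : ℕ → ℝ) (k : ℕ) (C : ℝ)
    (hC : ∀ j, j ≤ k → |u (y j) - u (y 0)| ≤ C) :
    |(∑ j ∈ Finset.range k, f (y (j + 1)) * (u (y (j + 1)) - u (y j)))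
        - f (y k) * (u (y k) - u (y 0))|
      ≤ C * ∑ j ∈ Finset.range k, |f (y (j + 1)) - f (y j)| := by
  rw [abelR f u y k]
  have e : (f (y k) * (u (y k) - u (y 0))
      + ∑ j ∈ Finset.range k, (f (y j) - f (y (j + 1))) * (u (y j) - u (y 0)))
      - f (y k) * (u (y k) - u (y 0))
      = ∑ j ∈ Finset.range k, (f (y j) - f (y (j + 1))) * (u (y j) - u (y 0)) := by ring
  rw [e]
  calc |∑ j ∈ Finset.range k, (f (y j) - f (y (j + 1))) * (u (y j) - u (y 0))|
      ≤ ∑ j ∈ Finset.range k, |(f (y j) - f (y (j + 1))) * (u (y j) - u (y 0))| :=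
        Finset.abs_sum_le_sum_abs _ _
    _ ≤ ∑ j ∈ Finset.range k, C * |f (y (j + 1)) - f (y j)| := by
        refine Finset.sum_le_sum fun j hj => ?_
        have hj' : j < k := Finset.mem_range.mp hj
        rw [abs_mul, abs_sub_comm (f (y j)) (f (y (j + 1))), mul_comm]
        exact mul_le_mul_of_nonneg_right (hC j (by omega)) (abs_nonneg _)
    _ = C * ∑ j ∈ Finset.range k, |f (y (j + 1)) - f (y j)| := (Finset.mul_sum _ _ _).symm

lemma boundL (f u : ℝ → ℝ) (y : ℕ → ℝ) (k : ℕ) (C : ℝ)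
    (hC : ∀ j, j ≤ k → |u (y k) - u (y j)| ≤ C) :
    |(∑ j ∈ Finset.range k, f (y j) * (u (y (j + 1)) - u (y j)))
        - f (y 0) * (u (y k) - u (y 0))|
      ≤ C * ∑ j ∈ Finset.range k, |f (y (j + 1)) - f (y j)| := by
  rw [abelL f u y k]
  have e : (f (y 0) * (u (y k) - u (y 0))
      + ∑ j ∈ Finset.range k, (f (y (j + 1)) - f (y j)) * (u (y k) - u (y (j + 1))))
      - f (y 0) * (u (y k) - u (y 0))
      = ∑ j ∈ Finset.range k, (f (y (j + 1)) - f (y j)) * (u (y k) - u (y (j + 1))) := by ring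
  rw [e]
  calc |∑ j ∈ Finset.range k, (f (y (j + 1)) - f (y j)) * (u (y k) - u (y (j + 1)))|
      ≤ ∑ j ∈ Finset.range k, |(f (y (j + 1)) - f (y j)) * (u (y k) - u (y (j + 1)))| :=
        Finset.abs_sum_le_sum_abs _ _
    _ ≤ ∑ j ∈ Finset.range k, C * |f (y (j + 1)) - f (y j)| := by
        refine Finset.sum_le_sum fun j hj => ?_
        have hj' : j < k := Finset.mem_range.mp hj
        rw [abs_mul, mul_comm]
        exact mul_le_mul_of_nonneg_right (hC (j + 1) (by omega)) (abs_nonneg _)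
    _ = C * ∑ j ∈ Finset.range k, |f (y (j + 1)) - f (y j)| := (Finset.mul_sum _ _ _).symm

@[simp] lemma unifR_n {α β : ℝ} (h : α ≤ β) {k : ℕ} (hk : 0 < k) :
    (unifR α β h k hk).n = k := rfl
@[simp] lemma unifR_pts {α β : ℝ} (h : α ≤ β) {k : ℕ} (hk : 0 < k) :
    (unifR α β h k hk).pts = uPts α β k := rfl
@[simp] lemma unifR_tag {α β : ℝ} (h : α ≤ β) {k : ℕ} (hk : 0 < k) :
    (unifR α β h k hk).tag = fun j => uPts α β k (j + 1) := rfl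
@[simp] lemma unifL_n {α β : ℝ} (h : α ≤ β) {k : ℕ} (hk : 0 < k) :
    (unifL α β h k hk).n = k := rfl
@[simp] lemma unifL_pts {α β : ℝ} (h : α ≤ β) {k : ℕ} (hk : 0 < k) :
    (unifL α β h k hk).pts = uPts α β k := rfl
@[simp] lemma unifL_tag {α β : ℝ} (h : α ≤ β) {k : ℕ} (hk : 0 < k) :
    (unifL α β h k hk).tag = uPts α β k := rfl

lemma glue_mesh {δ : ℝ} (P : TaggedPartition a c) (Q : TaggedPartition c b)
    (hPm : ∀ i, i < P.n → P.pts (i + 1) - P.pts i < δ)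
    (hQm : ∀ i, i < Q.n → Q.pts (i + 1) - Q.pts i < δ) :
    ∀ i, i < (glue P Q).n → (glue P Q).pts (i + 1) - (glue P Q).pts i < δ := by
  intro i hi
  rw [glue_n] at hi
  by_cases h : i < P.n
  · rw [glue_pts, gluePts_le P Q (by omega), gluePts_le P Q (by omega)]
    exact hPm i h
  · rw [glue_pts, gluePts_ge P Q (by omega), gluePts_ge P Q (by omega)]
    have e : i + 1 - P.n = (i - P.n) + 1 := by omega
    rw [e]
    exact hQm _ (by omega)

lemma unifR_err (f u : ℝ → ℝ) (a b H r α β : ℝ) (hr : 0 ≤ r) (hH : 0 ≤ H)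
    (hu : ∀ s ∈ Set.Icc a b, ∀ t ∈ Set.Icc a b, |u s - u t| ≤ H * |s - t| ^ r)
    (hsub : Set.Icc α β ⊆ Set.Icc a b) (h : α ≤ β) (k : ℕ) (hk : 0 < k) :
    |RSsum f u (unifR α β h k hk) - f β * (u β - u α)|
      ≤ H * (β - α) ^ r * Vsum f (unifR α β h k hk) := by
  have hy0 := uPts_zero α β k
  have hyk := uPts_last α β hk
  have hC : ∀ j, j ≤ k → |u (uPts α β k j) - u (uPts α β k 0)| ≤ H * (β - α) ^ r := by
    intro j hj
    rw [hy0]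
    have hmem := uPts_mem h hk j
    have hmem' : uPts α β k j ∈ Set.Icc a b := hsub hmem
    have hα : α ∈ Set.Icc a b := hsub ⟨le_rfl, h⟩
    refine (hu _ hmem' α hα).trans ?_
    have habs : |uPts α β k j - α| ≤ β - α := by
      rw [abs_of_nonneg (by linarith [hmem.1])]
      linarith [hmem.2]
    exact mul_le_mul_of_nonneg_left (Real.rpow_le_rpow (abs_nonneg _) habs hr) hH
  have hb := boundR f u (uPts α β k) k (H * (β - α) ^ r) hC
  rw [hy0, hyk] at hb
  simpa only [RSsum, Vsum, unifR_n, unifR_pts, unifR_tag] using hb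

lemma unifL_err (f u : ℝ → ℝ) (a b H r α β : ℝ) (hr : 0 ≤ r) (hH : 0 ≤ H)
    (hu : ∀ s ∈ Set.Icc a b, ∀ t ∈ Set.Icc a b, |u s - u t| ≤ H * |s - t| ^ r)
    (hsub : Set.Icc α β ⊆ Set.Icc a b) (h : α ≤ β) (k : ℕ) (hk : 0 < k) :
    |RSsum f u (unifL α β h k hk) - f α * (u β - u α)|
      ≤ H * (β - α) ^ r * Vsum f (unifL α β h k hk) := by
  have hy0 := uPts_zero α β k
  have hyk := uPts_last α β hk
  have hC : ∀ j, j ≤ k → |u (uPts α β k k) - u (uPts α β k j)| ≤ H * (β - α) ^ r := by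
    intro j hj
    rw [hyk]
    have hmem := uPts_mem h hk j
    have hmem' : uPts α β k j ∈ Set.Icc a b := hsub hmem
    have hβ : β ∈ Set.Icc a b := hsub ⟨h, le_rfl⟩
    refine (hu β hβ _ hmem').trans ?_
    have habs : |β - uPts α β k j| ≤ β - α := by
      rw [abs_of_nonneg (by linarith [hmem.2])]
      linarith [hmem.1]
    exact mul_le_mul_of_nonneg_left (Real.rpow_le_rpow (abs_nonneg _) habs hr) hH
  have hb := boundL f u (uPts α β k) k (H * (β - α) ^ r) hC
  rw [hy0, hyk] at hb
  simpa only [RSsum, Vsum, unifL_n, unifL_pts, unifL_tag] using hb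

end TwoPointAux

open TwoPointAux

theorem two_point_quadrature_dual_bounded_variation
    (a b H r t0 x t1 I : ℝ) (f u : ℝ → ℝ)
    (hr : 0 < r) (hr1 : r ≤ 1) (hH : 0 ≤ H)
    (hu : ∀ s ∈ Set.Icc a b, ∀ t ∈ Set.Icc a b, |u s - u t| ≤ H * |s - t| ^ r)
    (hf : BoundedVariationOn f (Set.Icc a b))
    (ht0 : a ≤ t0) (ht0x : t0 ≤ x) (hxt1 : x ≤ t1) (ht1 : t1 ≤ b)
    (hI : IsRSIntegral f u a b I) :
    |I - (u x - u a) * f t0 - (u b - u x) * f t1| ≤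
      H * (max (t0 - a) (max ((t1 - t0) / 2 + |x - (t0 + t1) / 2|) (b - t1))) ^ r *
        totalVar f a b := by
  set M := max (t0 - a) (max ((t1 - t0) / 2 + |x - (t0 + t1) / 2|) (b - t1)) with hM
  have hM1 : t0 - a ≤ M := le_max_left _ _
  have hMmid : (t1 - t0) / 2 + |x - (t0 + t1) / 2| ≤ M :=
    le_trans (le_max_left _ _) (le_max_right _ _)
  have hM4 : b - t1 ≤ M := le_trans (le_max_right _ _) (le_max_right _ _)
  have hM2 : x - t0 ≤ M := by
    have := le_abs_self (x - (t0 + t1) / 2); linarith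
  have hM3 : t1 - x ≤ M := by
    have := neg_abs_le (x - (t0 + t1) / 2); linarith
  have hM0 : 0 ≤ M := le_trans (by linarith) hM1
  have hHM : 0 ≤ H * M ^ r := mul_nonneg hH (Real.rpow_nonneg hM0 r)
  have hEq : I - (u x - u a) * f t0 - (u b - u x) * f t1
      = I - ((u x - u a) * f t0 + (u b - u x) * f t1) := by ring
  rw [hEq]
  set E := (u x - u a) * f t0 + (u b - u x) * f t1 with hE
  refine le_of_forall_pos_le_add fun ε hε => ?_
  obtain ⟨δ, hδ, hP⟩ := hI ε hε
  obtain ⟨N, hN⟩ := exists_nat_gt ((b - a) / δ)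
  set k := N + 1 with hk
  have hk0 : 0 < k := Nat.succ_pos N
  have hkR : (b - a) / δ < (k : ℝ) := by
    rw [hk]; push_cast; linarith
  have hmesh : ∀ α β : ℝ, a ≤ α → β ≤ b → α ≤ β → (β - α) / (k : ℝ) < δ := by
    intro α β h1 h2 h3
    have hkpos : (0 : ℝ) < k := by exact_mod_cast hk0
    rw [div_lt_iff₀ hkpos]
    rw [div_lt_iff₀ hδ] at hkR
    nlinarith
  set P1 := unifR a t0 ht0 k hk0 with hP1
  set P2 := unifL t0 x ht0x k hk0 with hP2
  set P3 := unifR x t1 hxt1 k hk0 with hP3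
  set P4 := unifL t1 b ht1 k hk0 with hP4
  set G := glue P1 (glue P2 (glue P3 P4)) with hG
  have m1 : ∀ i, i < P1.n → P1.pts (i + 1) - P1.pts i < δ := by
    rw [hP1]
    intro i hi
    rw [unifR_n] at hi
    rw [unifR_pts, uPts_gap k hi]
    exact hmesh a t0 le_rfl (by linarith) ht0
  have m2 : ∀ i, i < P2.n → P2.pts (i + 1) - P2.pts i < δ := by
    rw [hP2]
    intro i hi
    rw [unifL_n] at hi
    rw [unifL_pts, uPts_gap k hi]
    exact hmesh t0 x (by linarith) (by linarith) ht0x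
  have m3 : ∀ i, i < P3.n → P3.pts (i + 1) - P3.pts i < δ := by
    rw [hP3]
    intro i hi
    rw [unifR_n] at hi
    rw [unifR_pts, uPts_gap k hi]
    exact hmesh x t1 (by linarith) (by linarith) hxt1
  have m4 : ∀ i, i < P4.n → P4.pts (i + 1) - P4.pts i < δ := by
    rw [hP4]
    intro i hi
    rw [unifL_n] at hi
    rw [unifL_pts, uPts_gap k hi]
    exact hmesh t1 b (by linarith) le_rfl ht1
  have meshG : ∀ i, i < G.n → G.pts (i + 1) - G.pts i < δ := by
    rw [hG]
    exact glue_mesh _ _ m1 (glue_mesh _ _ m2 (glue_mesh _ _ m3 m4))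
  have hGclose : |RSsum f u G - I| < ε := hP G meshG
  have hRS : RSsum f u G
      = RSsum f u P1 + (RSsum f u P2 + (RSsum f u P3 + RSsum f u P4)) := by
    rw [hG, RSsum_glue, RSsum_glue, RSsum_glue]
  have hVs : Vsum f G = Vsum f P1 + (Vsum f P2 + (Vsum f P3 + Vsum f P4)) := by
    rw [hG, Vsum_glue, Vsum_glue, Vsum_glue]
  have e1 : |RSsum f u P1 - f t0 * (u t0 - u a)| ≤ H * (t0 - a) ^ r * Vsum f P1 := by
    rw [hP1]
    exact unifR_err f u a b H r a t0 hr.le hH hu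
      (Set.Icc_subset_Icc le_rfl (by linarith)) ht0 k hk0
  have e2 : |RSsum f u P2 - f t0 * (u x - u t0)| ≤ H * (x - t0) ^ r * Vsum f P2 := by
    rw [hP2]
    exact unifL_err f u a b H r t0 x hr.le hH hu
      (Set.Icc_subset_Icc (by linarith) (by linarith)) ht0x k hk0
  have e3 : |RSsum f u P3 - f t1 * (u t1 - u x)| ≤ H * (t1 - x) ^ r * Vsum f P3 := by
    rw [hP3]
    exact unifR_err f u a b H r x t1 hr.le hH hu
      (Set.Icc_subset_Icc (by linarith) (by linarith)) hxt1 k hk0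
  have e4 : |RSsum f u P4 - f t1 * (u b - u t1)| ≤ H * (b - t1) ^ r * Vsum f P4 := by
    rw [hP4]
    exact unifL_err f u a b H r t1 b hr.le hH hu
      (Set.Icc_subset_Icc (by linarith) le_rfl) ht1 k hk0
  have boost : ∀ (L V : ℝ), 0 ≤ L → L ≤ M → 0 ≤ V →
      H * L ^ r * V ≤ H * M ^ r * V := by
    intro L V hL hLM hV
    exact mul_le_mul_of_nonneg_right
      (mul_le_mul_of_nonneg_left (Real.rpow_le_rpow hL hLM hr.le) hH) hV
  have b1 := (e1.trans (boost _ _ (by linarith) hM1 (Vsum_nonneg f P1)))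
  have b2 := (e2.trans (boost _ _ (by linarith) hM2 (Vsum_nonneg f P2)))
  have b3 := (e3.trans (boost _ _ (by linarith) hM3 (Vsum_nonneg f P3)))
  have b4 := (e4.trans (boost _ _ (by linarith) hM4 (Vsum_nonneg f P4)))
  have hd : RSsum f u P1 + (RSsum f u P2 + (RSsum f u P3 + RSsum f u P4)) - E
      = (RSsum f u P1 - f t0 * (u t0 - u a))
        + ((RSsum f u P2 - f t0 * (u x - u t0))
          + ((RSsum f u P3 - f t1 * (u t1 - u x))
            + (RSsum f u P4 - f t1 * (u b - u t1)))) := by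
    rw [hE]; ring
  have hErr : |RSsum f u G - E| ≤ H * M ^ r * Vsum f G := by
    rw [hRS, hVs, hd]
    have ha1 := abs_add_le (RSsum f u P1 - f t0 * (u t0 - u a))
      ((RSsum f u P2 - f t0 * (u x - u t0))
        + ((RSsum f u P3 - f t1 * (u t1 - u x))
          + (RSsum f u P4 - f t1 * (u b - u t1))))
    have ha2 := abs_add_le (RSsum f u P2 - f t0 * (u x - u t0))
      ((RSsum f u P3 - f t1 * (u t1 - u x))
        + (RSsum f u P4 - f t1 * (u b - u t1)))
    have ha3 := abs_add_le (RSsum f u P3 - f t1 * (u t1 - u x))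
      (RSsum f u P4 - f t1 * (u b - u t1))
    have hring : H * M ^ r * Vsum f P1 + H * M ^ r * Vsum f P2
        + H * M ^ r * Vsum f P3 + H * M ^ r * Vsum f P4
        = H * M ^ r * (Vsum f P1 + (Vsum f P2 + (Vsum f P3 + Vsum f P4))) := by ring
    linarith
  have hVle : Vsum f G ≤ totalVar f a b := Vsum_le_totalVar f G hf
  have hfinal : H * M ^ r * Vsum f G ≤ H * M ^ r * totalVar f a b :=
    mul_le_mul_of_nonneg_left hVle hHM
  have htri : |I - E| ≤ |I - RSsum f u G| + |RSsum f u G - E| := abs_sub_le I (RSsum f u G) E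
  rw [abs_sub_comm I (RSsum f u G)] at htri
  linarith
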